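/- If H(M_1|Y_1^N) ≤ Nε, N R_1 - H(M_1|Y_2^N) ≤ Nε, and H(M_1) = N R_1, then N R_1 ≤ Σ_{n=1}^N [ I(M_1 ; Y_{1,n} | U_n) - I(M_1 ; Y_{2,n} | U_n) + H(W_n | U_n, M_1) ] + 2Nε, where U_n = (Y_{1,n+1}^N, Y_2^{n-1}). -/
import Mathlib


open scoped BigOperators

/-- A probability mass function on a finite sample space. -/
def IsPMF {Ω : Type} [Fintype Ω] (p : Ω → ℝ) : Prop :=
  (∀ ω, 0 ≤ p ω) ∧ ∑ ω, p ω = 1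

/-- Probability that the discrete random variable `X` takes the value `x`. -/
noncomputable def pm {Ω : Type} [Fintype Ω] (p : Ω → ℝ) {α : Type} [DecidableEq α]
    (X : Ω → α) (x : α) : ℝ :=
  ∑ ω, if X ω = x then p ω else 0

/-- Shannon entropy (base 2) of a discrete random variable `X`. -/
noncomputable def ent {Ω : Type} [Fintype Ω] (p : Ω → ℝ) {α : Type} [Fintype α] [DecidableEq α]
    (X : Ω → α) : ℝ :=
  -∑ x, pm p X x * Real.logb 2 (pm p X x)

/-- Conditional Shannon entropy `H(X | Y)`. -/
noncomputable def cent {Ω : Type} [Fintype Ω] (p : Ω → ℝ) {α β : Type}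
    [Fintype α] [DecidableEq α] [Fintype β] [DecidableEq β]
    (X : Ω → α) (Y : Ω → β) : ℝ :=
  ent p (fun ω => (X ω, Y ω)) - ent p Y

/-- Mutual information `I(X ; Y)`. -/
noncomputable def mi {Ω : Type} [Fintype Ω] (p : Ω → ℝ) {α β : Type}
    [Fintype α] [DecidableEq α] [Fintype β] [DecidableEq β]
    (X : Ω → α) (Y : Ω → β) : ℝ :=
  ent p X - cent p X Y

/-- Conditional mutual information `I(X ; Y | Z) = H(X|Z) - H(X|Z,Y)`. -/
noncomputable def cmi {Ω : Type} [Fintype Ω] (p : Ω → ℝ) {α β γ : Type}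
    [Fintype α] [DecidableEq α] [Fintype β] [DecidableEq β] [Fintype γ] [DecidableEq γ]
    (X : Ω → α) (Y : Ω → β) (Z : Ω → γ) : ℝ :=
  cent p X Z - cent p X (fun ω => (Z ω, Y ω))

/-- Independence of two discrete random variables. -/
def IndepRV {Ω : Type} [Fintype Ω] (p : Ω → ℝ) {α β : Type} [DecidableEq α] [DecidableEq β]
    (X : Ω → α) (Y : Ω → β) : Prop :=
  ∀ x y, pm p (fun ω => (X ω, Y ω)) (x, y) = pm p X x * pm p Y y

/-- The strict prefix `(Y_1, …, Y_{n-1})` of a sequence of random variables. -/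
def pfx {Ω : Type} {N : ℕ} {α : Type} (Y : Fin N → Ω → α) (n : Fin N) :
    Ω → ({i : Fin N // i < n} → α) :=
  fun ω i => Y i.1 ω

/-- The strict suffix `(Y_{n+1}, …, Y_N)` of a sequence of random variables. -/
def sfx {Ω : Type} {N : ℕ} {α : Type} (Y : Fin N → Ω → α) (n : Fin N) :
    Ω → ({i : Fin N // n < i} → α) :=
  fun ω i => Y i.1 ω


section Aux

variable {Ω : Type} [Fintype Ω] (p : Ω → ℝ)

lemma pm_nonneg (hp : IsPMF p) {β : Type} [DecidableEq β] (X : Ω → β) (x : β) :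
    0 ≤ pm p X x := by
  apply Finset.sum_nonneg
  intro ω _
  split
  · exact hp.1 ω
  · exact le_rfl

lemma pm_comp_inj {β γ : Type} [DecidableEq β] [DecidableEq γ]
    (X : Ω → β) (g : β → γ) (hg : Function.Injective g) (x : β) :
    pm p (fun ω => g (X ω)) (g x) = pm p X x := by
  unfold pm
  apply Finset.sum_congr rfl
  intro ω _
  simp [hg.eq_iff]

lemma pm_comp_zero {β γ : Type} [DecidableEq β] [DecidableEq γ]
    (X : Ω → β) (g : β → γ) (y : γ) (hy : ∀ x, g x ≠ y) :
    pm p (fun ω => g (X ω)) y = 0 := by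
  unfold pm
  apply Finset.sum_eq_zero
  intro ω _
  simp [hy (X ω)]

lemma ent_comp_inj {β γ : Type} [Fintype β] [DecidableEq β] [Fintype γ] [DecidableEq γ]
    (X : Ω → β) (g : β → γ) (hg : Function.Injective g) :
    ent p (fun ω => g (X ω)) = ent p X := by
  unfold ent
  congr 1
  have h1 : ∑ y : γ, pm p (fun ω => g (X ω)) y * Real.logb 2 (pm p (fun ω => g (X ω)) y)
      = ∑ y ∈ Finset.univ.image g,
          pm p (fun ω => g (X ω)) y * Real.logb 2 (pm p (fun ω => g (X ω)) y) := by
    symm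
    apply Finset.sum_subset (Finset.subset_univ _)
    intro y _ hy
    have hy' : ∀ x, g x ≠ y := by
      intro x hx
      exact hy (Finset.mem_image.mpr ⟨x, Finset.mem_univ x, hx⟩)
    rw [pm_comp_zero p X g y hy']
    simp
  rw [h1, Finset.sum_image (fun x _ y _ h => hg h)]
  apply Finset.sum_congr rfl
  intro x _
  rw [pm_comp_inj p X g hg]

lemma pm_marginal {β γ : Type} [Fintype β] [DecidableEq β] [DecidableEq γ]
    (X : Ω → β) (Z : Ω → γ) (z : γ) :
    pm p Z z = ∑ x : β, pm p (fun ω => (X ω, Z ω)) (x, z) := by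
  unfold pm
  rw [Finset.sum_comm]
  apply Finset.sum_congr rfl
  intro ω _
  by_cases h : Z ω = z
  · simp [Prod.ext_iff, h]
  · simp [Prod.ext_iff, h]

lemma cent_nonneg (hp : IsPMF p) {β γ : Type} [Fintype β] [DecidableEq β]
    [Fintype γ] [DecidableEq γ] (X : Ω → β) (Z : Ω → γ) :
    0 ≤ cent p X Z := by
  have key : ent p Z ≤ ent p (fun ω => (X ω, Z ω)) := by
    unfold ent
    rw [neg_le_neg_iff, Fintype.sum_prod_type_right]
    apply Finset.sum_le_sum
    intro z _
    rw [pm_marginal p X Z z, Finset.sum_mul]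
    apply Finset.sum_le_sum
    intro x _
    set q := pm p (fun ω => (X ω, Z ω)) (x, z) with hq
    have hq0 : 0 ≤ q := pm_nonneg p hp _ _
    rcases eq_or_lt_of_le hq0 with h0 | h0
    · rw [← h0]; simp
    · apply mul_le_mul_of_nonneg_left _ hq0
      apply Real.logb_le_logb_of_le one_lt_two h0
      exact Finset.single_le_sum
        (f := fun x' => pm p (fun ω => (X ω, Z ω)) (x', z))
        (fun x' _ => pm_nonneg p hp _ _) (Finset.mem_univ x)
  unfold cent
  linarith

end Aux

set_option synthInstance.maxSize 1024
set_option maxHeartbeats 1000000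

theorem classII_single_rate_converse {Ω : Type} [Fintype Ω] {N : ℕ} {μ α σ : Type}
    [Fintype μ] [DecidableEq μ] [Fintype α] [DecidableEq α] [Fintype σ] [DecidableEq σ]
    (p : Ω → ℝ) (hp : IsPMF p) (M₁ : Ω → μ) (Y₁ Y₂ : Fin N → Ω → α) (W : Fin N → Ω → σ)
    (R₁ ε : ℝ)
    (hent : ent p M₁ = (N : ℝ) * R₁)
    (hfano : cent p M₁ (fun ω => (fun i : Fin N => Y₁ i ω)) ≤ (N : ℝ) * ε)
    (hsecrecy : (N : ℝ) * R₁ - cent p M₁ (fun ω => (fun i : Fin N => Y₂ i ω)) ≤ (N : ℝ) * ε) :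
    (N : ℝ) * R₁ ≤
      (∑ n : Fin N,
        (cmi p M₁ (Y₁ n) (fun ω => (sfx Y₁ n ω, pfx Y₂ n ω)) -
         cmi p M₁ (Y₂ n) (fun ω => (sfx Y₁ n ω, pfx Y₂ n ω)) +
         cent p (W n) (fun ω => ((sfx Y₁ n ω, pfx Y₂ n ω), M₁ ω)))) +
      2 * (N : ℝ) * ε := by
  -- the hybrid sequence V k : first k coordinates from Y₂, the rest from Y₁
  set V : ℕ → Ω → (Fin N → α) := fun k ω i => if (i : ℕ) < k then Y₂ i ω else Y₁ i ω with hV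
  set G : ℕ → ℝ := fun k => ent p (V k) - ent p (fun ω => (M₁ ω, V k ω)) with hG
  -- the per-step identity
  have hkey : ∀ n : Fin N,
      cmi p M₁ (Y₁ n) (fun ω => (sfx Y₁ n ω, pfx Y₂ n ω)) -
      cmi p M₁ (Y₂ n) (fun ω => (sfx Y₁ n ω, pfx Y₂ n ω)) = G ↑n - G (↑n + 1) := by
    intro n
    set U : Ω → (({i : Fin N // n < i} → α) × ({i : Fin N // i < n} → α)) :=
      fun ω => (sfx Y₁ n ω, pfx Y₂ n ω) with hU
    set g : (Fin N → α) → ((({i : Fin N // n < i} → α) × ({i : Fin N // i < n} → α)) × α) :=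
      fun f => ((fun i => f i.1, fun i => f i.1), f n) with hg
    have hginj : Function.Injective g := by
      intro f f' h
      funext i
      rcases lt_trichotomy i n with h' | h' | h'
      · exact congrFun (congrArg (fun q => q.1.2) h) ⟨i, h'⟩
      · rw [h']; exact congrArg Prod.snd h
      · exact congrFun (congrArg (fun q => q.1.1) h) ⟨i, h'⟩
    have hginj' : Function.Injective
        (fun q : μ × (Fin N → α) => (q.1, g q.2)) := by
      intro a b h
      have h' : (a.1, g a.2) = (b.1, g b.2) := h
      injection h' with h1 h2
      exact Prod.ext h1 (hginj h2)
    have h1 : (fun ω => g (V ↑n ω)) = (fun ω => (U ω, Y₁ n ω)) := by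
      funext ω
      simp only [hg, hV, hU]
      refine Prod.ext (Prod.ext ?_ ?_) ?_
      · funext i
        have hi : ¬ ((i.1 : ℕ) < (n : ℕ)) := by
          have := Fin.lt_def.mp i.2; omega
        simp [sfx, hi]
      · funext i
        have hi : ((i.1 : ℕ) < (n : ℕ)) := Fin.lt_def.mp i.2
        simp [pfx, hi]
      · simp
    have h2 : (fun ω => g (V (↑n + 1) ω)) = (fun ω => (U ω, Y₂ n ω)) := by
      funext ω
      simp only [hg, hV, hU]
      refine Prod.ext (Prod.ext ?_ ?_) ?_
      · funext i
        have hi : ¬ ((i.1 : ℕ) < (n : ℕ) + 1) := by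
          have := Fin.lt_def.mp i.2; omega
        simp [sfx, hi]
      · funext i
        have hi : ((i.1 : ℕ) < (n : ℕ) + 1) := by
          have := Fin.lt_def.mp i.2; omega
        simp [pfx, hi]
      · simp
    have e1 : ent p (V ↑n) = ent p (fun ω => (U ω, Y₁ n ω)) := by
      rw [← h1, ent_comp_inj p (V ↑n) g hginj]
    have e2 : ent p (V (↑n + 1)) = ent p (fun ω => (U ω, Y₂ n ω)) := by
      rw [← h2, ent_comp_inj p (V (↑n + 1)) g hginj]
    have e3 : ent p (fun ω => (M₁ ω, V ↑n ω))
        = ent p (fun ω => (M₁ ω, (U ω, Y₁ n ω))) := by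
      have := ent_comp_inj p (fun ω => (M₁ ω, V ↑n ω))
        (fun q : μ × (Fin N → α) => (q.1, g q.2)) hginj'
      rw [← this]
      congr 1
      funext ω
      exact congrArg (fun z => (M₁ ω, z)) (congrFun h1 ω)
    have e4 : ent p (fun ω => (M₁ ω, V (↑n + 1) ω))
        = ent p (fun ω => (M₁ ω, (U ω, Y₂ n ω))) := by
      have := ent_comp_inj p (fun ω => (M₁ ω, V (↑n + 1) ω))
        (fun q : μ × (Fin N → α) => (q.1, g q.2)) hginj'
      rw [← this]
      congr 1
      funext ω
      exact congrArg (fun z => (M₁ ω, z)) (congrFun h2 ω)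
    simp only [cmi, cent, hG]
    rw [e1, e2, e3, e4]
    ring_nf
  -- the telescoping sum
  have hsum : ∑ n : Fin N,
      (cmi p M₁ (Y₁ n) (fun ω => (sfx Y₁ n ω, pfx Y₂ n ω)) -
       cmi p M₁ (Y₂ n) (fun ω => (sfx Y₁ n ω, pfx Y₂ n ω))) = G 0 - G N := by
    rw [Finset.sum_congr rfl (fun n _ => hkey n)]
    rw [Fin.sum_univ_eq_sum_range (fun k => G k - G (k + 1)) N]
    exact Finset.sum_range_sub' G N
  -- boundary values
  have hV0 : V 0 = (fun ω => (fun i : Fin N => Y₁ i ω)) := by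
    funext ω i
    simp [hV]
  have hVN : V N = (fun ω => (fun i : Fin N => Y₂ i ω)) := by
    funext ω i
    simp [hV, i.isLt]
  have hG0 : G 0 = - cent p M₁ (fun ω => (fun i : Fin N => Y₁ i ω)) := by
    simp only [hG, hV0, cent]
    ring
  have hGN : G N = - cent p M₁ (fun ω => (fun i : Fin N => Y₂ i ω)) := by
    simp only [hG, hVN, cent]
    ring
  -- assemble
  have hmono : ∑ n : Fin N,
      (cmi p M₁ (Y₁ n) (fun ω => (sfx Y₁ n ω, pfx Y₂ n ω)) -
       cmi p M₁ (Y₂ n) (fun ω => (sfx Y₁ n ω, pfx Y₂ n ω))) ≤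
      ∑ n : Fin N,
      (cmi p M₁ (Y₁ n) (fun ω => (sfx Y₁ n ω, pfx Y₂ n ω)) -
       cmi p M₁ (Y₂ n) (fun ω => (sfx Y₁ n ω, pfx Y₂ n ω)) +
       cent p (W n) (fun ω => ((sfx Y₁ n ω, pfx Y₂ n ω), M₁ ω))) := by
    apply Finset.sum_le_sum
    intro n _
    have := cent_nonneg p hp (W n) (fun ω => ((sfx Y₁ n ω, pfx Y₂ n ω), M₁ ω))
    linarith
  rw [hG0, hGN] at hsum
  linarith
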